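/- arXiv:2006.07246 — 2 statements merged into one kernel-verified Lean document; each statement's English description precedes it below -/
import Mathlib

section
/- Fixed points of Z (sufficient condition): if a digit string s has run-length representation (a_i, n_i)_i with n_i = 2 and a_i ≥ 2 for all i, then Z(s) = s. -/
/-- Run-length encoding of a digit string. -/
def rle : List ℕ → List (ℕ × ℕ)
  | [] => []
  | a :: t =>
    match rle t with
    | [] => [(a, 1)]
    | (b, n) :: r => if a = b then (b, n + 1) :: r else (a, 1) :: (b, n) :: r

/-- The "look-and-say-the-biggest" map: each maximal run of the digit `a` of length `n`
is replaced by the decimal digits of `max n a` followed by the digit `a`.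
(When `n ≤ 9` this is just the two digits `max n a`, `a`.) -/
def Z (s : List ℕ) : List ℕ :=
  ((rle s).map fun p => (Nat.digits 10 (max p.2 p.1)).reverse ++ [p.1]).flatten

/-- `r` is a run-length representation of the digit string `s`: all run lengths are
positive, consecutive base digits differ, and the expansion of `r` equals `s`. -/
def IsRLE (r : List (ℕ × ℕ)) (s : List ℕ) : Prop :=
  (∀ p ∈ r, 1 ≤ p.2) ∧ (r.map Prod.fst).Chain' (· ≠ ·) ∧
    (r.map fun p => List.replicate p.2 p.1).flatten = s


lemma rle_cons_nil (a : ℕ) (t : List ℕ) (hr : rle t = []) :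
    rle (a :: t) = [(a, 1)] := by rw [rle, hr]

lemma rle_cons_eq (a n : ℕ) (t : List ℕ) (r : List (ℕ × ℕ)) (hr : rle t = (a, n) :: r) :
    rle (a :: t) = (a, n + 1) :: r := by rw [rle, hr]; simp

lemma rle_cons_ne (a b n : ℕ) (t : List ℕ) (r : List (ℕ × ℕ)) (hr : rle t = (b, n) :: r)
    (hab : a ≠ b) : rle (a :: t) = (a, 1) :: (b, n) :: r := by rw [rle, hr]; simp [hab]

lemma rle_expand (s : List ℕ) :
    ((rle s).map fun p => List.replicate p.2 p.1).flatten = s := by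
  induction s with
  | nil => rfl
  | cons a t ih =>
    rcases hr : rle t with _ | ⟨⟨b, n⟩, r⟩ <;> rw [hr] at ih
    · rw [rle_cons_nil a t hr]
      simp at ih
      simp [ih]
    · by_cases hab : a = b
      · subst hab
        rw [rle_cons_eq a n t r hr]
        simp only [List.map_cons, List.flatten_cons] at ih ⊢
        rw [List.replicate_succ, List.cons_append, ih]
      · rw [rle_cons_ne a b n t r hr hab]
        simp only [List.map_cons, List.flatten_cons] at ih ⊢
        rw [ih]
        rfl

lemma rle_mem_fst (s : List ℕ) (p : ℕ × ℕ) (hp : p ∈ rle s) : p.1 ∈ s := by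
  induction s with
  | nil => simp [rle] at hp
  | cons a t ih =>
    rcases hr : rle t with _ | ⟨⟨b, n⟩, r⟩
    · rw [rle_cons_nil a t hr] at hp
      simp at hp
      simp [hp]
    · by_cases hab : a = b
      · subst hab
        rw [rle_cons_eq a n t r hr, List.mem_cons] at hp
        rcases hp with hp | hp
        · rw [hp]; exact List.mem_cons_self
        · right; exact ih (hr ▸ List.mem_cons_of_mem _ hp)
      · rw [rle_cons_ne a b n t r hr hab, List.mem_cons] at hp
        rcases hp with hp | hp
        · rw [hp]; exact List.mem_cons_self
        · right; exact ih (hr ▸ hp)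

/-- Fixed points of `Z`, sufficient condition: all runs of length 2 with digit ≥ 2. -/
theorem Z_fixed_of_runs_two (s : List ℕ) (hdig : ∀ d ∈ s, d ≤ 9)
    (h : ∀ p ∈ rle s, p.2 = 2 ∧ 2 ≤ p.1) : Z s = s := by
  have key : ((rle s).map fun p => (Nat.digits 10 (max p.2 p.1)).reverse ++ [p.1])
      = (rle s).map fun p => List.replicate p.2 p.1 := by
    apply List.map_congr_left
    intro p hp
    obtain ⟨h2, ha⟩ := h p hp
    have h9 : p.1 ≤ 9 := by
      apply hdig
      refine rle_mem_fst s p hp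
    have hmax : max p.2 p.1 = p.1 := by omega
    rw [hmax, Nat.digits_def' (by norm_num : 1 < 10) (by omega)]
    have : p.1 % 10 = p.1 := Nat.mod_eq_of_lt (by omega)
    rw [this, Nat.div_eq_of_lt (by omega)]
    simp [h2, List.replicate]
  rw [Z, key, rle_expand]
end

section
/- If s is an adult digit string (all digits ≥ 4) in which no digit appears more than 9 times consecutively, then Z(Z(Z(s))) = Z(Z(s)). In particular, the sequence Z^n(s) is eventually constant. -/
lemma rle_cons_eq_s4 (a : ℕ) (t : List ℕ) :
    rle (a :: t) = match rle t with
      | [] => [(a, 1)]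
      | (b, n) :: r => if a = b then (b, n + 1) :: r else (a, 1) :: (b, n) :: r := rfl

lemma rle_ne_nil (a : ℕ) (t : List ℕ) : rle (a :: t) ≠ [] := by
  rw [rle_cons_eq_s4]
  rcases h : rle t with _ | ⟨⟨b, n⟩, r⟩
  · simp
  · dsimp only
    split <;> simp

lemma rle_eq_nil {t : List ℕ} (h : rle t = []) : t = [] := by
  cases t with
  | nil => rfl
  | cons a t => exact absurd h (rle_ne_nil a t)

lemma rle_head : ∀ (t : List ℕ) (b n : ℕ) (r : List (ℕ × ℕ)),
    rle t = (b, n) :: r → ∃ u, t = b :: u := by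
  intro t
  cases t with
  | nil => intro b n r h; simp [rle] at h
  | cons a t =>
    intro b n r h
    rw [rle_cons_eq_s4] at h
    rcases h' : rle t with _ | ⟨⟨c, m⟩, r'⟩ <;> rw [h'] at h
    · simp at h
      exact ⟨t, by rw [h.1.1]⟩
    · dsimp only at h
      split at h
      · next heq => simp at h; exact ⟨t, by rw [heq, h.1.1]⟩
      · simp at h; exact ⟨t, by rw [h.1.1]⟩

lemma rle_flatten (t : List ℕ) :
    ((rle t).map fun p => List.replicate p.2 p.1).flatten = t := by
  induction t with
  | nil => rfl
  | cons a t ih =>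
    rw [rle_cons_eq_s4]
    rcases h : rle t with _ | ⟨⟨b, n⟩, r⟩
    · rw [rle_eq_nil h]; simp
    · rw [h] at ih
      dsimp only
      split
      · next heq =>
        subst heq
        simpa [List.replicate_succ] using ih
      · simpa using ih

lemma rle_fst_mem {t : List ℕ} {p : ℕ × ℕ} (hp : p ∈ rle t) : p.1 ∈ t := by
  induction t with
  | nil => simp [rle] at hp
  | cons a t ih =>
    rw [rle_cons_eq_s4] at hp
    rcases h : rle t with _ | ⟨⟨b, n⟩, r⟩ <;> rw [h] at hp
    · simp at hp; simp [hp]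
    · dsimp only at hp
      split at hp
      · next heq =>
        rcases List.mem_cons.mp hp with h1 | h1
        · subst heq; rw [h1]; simp
        · exact List.mem_cons_of_mem a (ih (h ▸ List.mem_cons_of_mem _ h1))
      · rcases List.mem_cons.mp hp with h1 | h1
        · rw [h1]; simp
        · exact List.mem_cons_of_mem a (ih (h ▸ h1))

lemma rle_chain (t : List ℕ) : ((rle t).map Prod.fst).Chain' (· ≠ ·) := by
  induction t with
  | nil => simp [rle, List.Chain']
  | cons a t ih =>
    rw [rle_cons_eq_s4]
    rcases h : rle t with _ | ⟨⟨b, n⟩, r⟩ <;> rw [h] at ih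
    · simp [List.Chain']
    · dsimp only
      split
      · exact ih
      · next hne =>
        exact List.isChain_cons_cons.mpr ⟨hne, ih⟩

lemma rle_pos (t : List ℕ) : ∀ p ∈ rle t, 1 ≤ p.2 := by
  induction t with
  | nil => simp [rle]
  | cons a t ih =>
    intro p hp
    rw [rle_cons_eq_s4] at hp
    rcases h : rle t with _ | ⟨⟨b, n⟩, r⟩ <;> rw [h] at hp
    · simp at hp; simp [hp]
    · dsimp only at hp
      split at hp
      · rcases List.mem_cons.mp hp with h1 | h1
        · simp [h1]
        · exact ih p (h ▸ List.mem_cons_of_mem _ h1)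
      · rcases List.mem_cons.mp hp with h1 | h1
        · simp [h1]
        · exact ih p (h ▸ h1)

lemma rle_doubled (L : List ℕ) (h : L.Chain' (· ≠ ·)) :
    rle ((L.map fun a => [a, a]).flatten) = L.map fun a => (a, 2) := by
  induction L with
  | nil => rfl
  | cons a L ih =>
    cases L with
    | nil => simp [rle, rle_cons_eq_s4]
    | cons b L' =>
      have hab : a ≠ b := (List.isChain_cons_cons.mp h).1
      have ih' := ih (List.isChain_cons_cons.mp h).2
      simp only [List.map_cons, List.flatten_cons] at ih' ⊢
      show rle (a :: a :: (([b,b] :: L'.map fun a => [a,a]).flatten)) = _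
      rw [List.flatten_cons, rle_cons_eq_s4, rle_cons_eq_s4, ih']
      simp [hab]

lemma digits_single {m : ℕ} (h1 : 1 ≤ m) (h2 : m ≤ 9) : Nat.digits 10 m = [m] := by
  rw [Nat.digits_def' (by norm_num) h1, Nat.mod_eq_of_lt (by omega),
    Nat.div_eq_of_lt (by omega), Nat.digits_zero]

/-- Head-run control for strings of the form `f p₁, a₁, f p₂, a₂, …` with the `aᵢ`
pairwise adjacent-distinct: all runs have length ≤ 3, and a head run of length ≥ 2
has base equal to the first `aᵢ`. -/
lemma run_bound (f : ℕ × ℕ → ℕ) :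
    ∀ (r : List (ℕ × ℕ)), (r.map Prod.fst).Chain' (· ≠ ·) →
      (∀ q ∈ rle ((r.map fun p => [f p, p.1]).flatten), q.2 ≤ 3) ∧
      (∀ c k rest, rle ((r.map fun p => [f p, p.1]).flatten) = (c, k) :: rest →
        2 ≤ k → ∃ p rr, r = p :: rr ∧ c = p.1) := by
  intro r
  induction r with
  | nil =>
    intro _
    refine ⟨?_, ?_⟩
    · intro q hq; simp [rle] at hq
    · intro c k rest h; simp [rle] at h
  | cons p r ih =>
    intro hch
    have hch' : (r.map Prod.fst).Chain' (· ≠ ·) := (List.isChain_cons.mp (by simpa [List.Chain'] using hch)).2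
    obtain ⟨ihb, ihh⟩ := ih hch'
    simp only [List.map_cons, List.flatten_cons]
    set u := ((r.map fun p => [f p, p.1]).flatten) with hu
    show (∀ q ∈ rle (f p :: p.1 :: u), q.2 ≤ 3) ∧
      (∀ c k rest, rle (f p :: p.1 :: u) = (c, k) :: rest → 2 ≤ k →
        ∃ p' rr, p :: r = p' :: rr ∧ c = p'.1)
    rcases h : rle u with _ | ⟨⟨c, k⟩, rest⟩
    · -- u is empty
      have hu0 : u = [] := rle_eq_nil h
      rw [hu0]
      rw [rle_cons_eq_s4, rle_cons_eq_s4]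
      simp only [rle]
      by_cases hfc : f p = p.1
      · simp only [hfc, if_pos rfl]
        refine ⟨by intro q hq; simp at hq; simp [hq], ?_⟩
        intro c k rest hck h2
        simp at hck
        exact ⟨p, r, rfl, hck.1.1.symm⟩
      · simp only [if_neg hfc]
        refine ⟨by intro q hq; simp at hq; rcases hq with h1|h1 <;> simp [h1], ?_⟩
        intro c k rest hck h2
        simp at hck
        omega
    · -- u nonempty, rle u = (c,k) :: rest
      have hk3 : k ≤ 3 := by have := ihb (c, k) (by rw [h]; simp); simpa using this
      have hrest : ∀ q ∈ rest, q.2 ≤ 3 := by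
        intro q hq; exact ihb q (by rw [h]; exact List.mem_cons_of_mem _ hq)
      -- r is nonempty
      obtain ⟨p', rr, rfl⟩ : ∃ p' rr, r = p' :: rr := by
        cases r with
        | nil => simp [hu, rle] at h
        | cons p' rr => exact ⟨p', rr, rfl⟩
      have hne : p.1 ≠ p'.1 := by
        simp only [List.map_cons, List.Chain', List.isChain_cons_cons] at hch
        exact hch.1
      -- step 1 : rle (p.1 :: u)
      have hstep1 : rle (p.1 :: u) = if p.1 = c then (c, 2) :: rest
          else (p.1, 1) :: (c, k) :: rest := by
        rw [rle_cons_eq_s4, h]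
        by_cases hc : p.1 = c
        · have hk0 : 1 ≤ k := by
            have := rle_pos u (c, k) (by rw [h]; simp)
            simpa using this
          have hk1 : k = 1 := by
            by_contra hk1
            obtain ⟨q, rq, hq, hcq⟩ := ihh c k rest h (by omega)
            have hqp : q = p' := by
              simp at hq; exact hq.1.symm
            exact hne (by rw [hc, hcq, hqp])
          simp [hc, hk1]
        · simp [hc]
      constructor
      · intro q hq
        rw [rle_cons_eq_s4, hstep1] at hq
        by_cases hc : p.1 = c
        · simp only [if_pos hc] at hq
          by_cases hfc : f p = c
          · simp only [hfc, if_pos rfl] at hq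
            rcases List.mem_cons.mp hq with h1 | h1
            · simp [h1]
            · exact hrest q h1
          · simp only [if_neg hfc] at hq
            rcases List.mem_cons.mp hq with h1 | h1
            · simp [h1]
            · rcases List.mem_cons.mp h1 with h2 | h2
              · simp [h2]
              · exact hrest q h2
        · simp only [if_neg hc] at hq
          by_cases hfc : f p = p.1
          · simp only [hfc, if_pos rfl] at hq
            rcases List.mem_cons.mp hq with h1 | h1
            · simp [h1]
            · rcases List.mem_cons.mp h1 with h2 | h2
              · simp [h2]; omega
              · exact hrest q h2
          · simp only [if_neg hfc] at hq
            rcases List.mem_cons.mp hq with h1 | h1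
            · simp [h1]
            · rcases List.mem_cons.mp h1 with h2 | h2
              · simp [h2]
              · rcases List.mem_cons.mp h2 with h3 | h3
                · simp [h3]; omega
                · exact hrest q h3
      · intro c' k' rest' hck h2
        rw [rle_cons_eq_s4, hstep1] at hck
        by_cases hc : p.1 = c
        · simp only [if_pos hc] at hck
          by_cases hfc : f p = c
          · simp only [hfc, if_pos rfl] at hck
            simp at hck
            exact ⟨p, _, rfl, by rw [← hck.1.1, ← hc]⟩
          · simp only [if_neg hfc] at hck
            simp at hck; omega
        · simp only [if_neg hc] at hck
          by_cases hfc : f p = p.1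
          · simp only [hfc, if_pos rfl] at hck
            simp at hck
            exact ⟨p, _, rfl, hck.1.1.symm⟩
          · simp only [if_neg hfc] at hck
            simp at hck; omega

lemma Z_doubled (L : List ℕ) (h : L.Chain' (· ≠ ·)) (h4 : ∀ a ∈ L, 4 ≤ a)
    (h9 : ∀ a ∈ L, a ≤ 9) :
    Z ((L.map fun a => [a, a]).flatten) = (L.map fun a => [a, a]).flatten := by
  unfold Z
  rw [rle_doubled L h, List.map_map]
  congr 1
  apply List.map_congr_left
  intro a ha
  have h4a := h4 a ha
  have h9a := h9 a ha
  simp only [Function.comp]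
  rw [show max (a, 2).2 (a, 2).1 = a by simp; omega]
  rw [digits_single (by omega) h9a]
  rfl

lemma Z_Z_eq (t : List ℕ) (h4 : ∀ d ∈ t, 4 ≤ d) (h9 : ∀ d ∈ t, d ≤ 9)
    (hrun : ∀ q ∈ rle t, q.2 ≤ 3) : Z (Z t) = Z t := by
  have hform : Z t = (((rle t).map Prod.fst).map fun a => [a, a]).flatten := by
    unfold Z
    rw [List.map_map]
    congr 1
    apply List.map_congr_left
    intro q hq
    have h4q : 4 ≤ q.1 := h4 q.1 (rle_fst_mem hq)
    have h9q : q.1 ≤ 9 := h9 q.1 (rle_fst_mem hq)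
    have hm : max q.2 q.1 = q.1 := by have := hrun q hq; omega
    simp only [Function.comp, hm]
    rw [digits_single (by omega) h9q]
    rfl
  have hL4 : ∀ a ∈ (rle t).map Prod.fst, 4 ≤ a := by
    intro a ha
    obtain ⟨q, hq, rfl⟩ := List.mem_map.mp ha
    exact h4 q.1 (rle_fst_mem hq)
  have hL9 : ∀ a ∈ (rle t).map Prod.fst, a ≤ 9 := by
    intro a ha
    obtain ⟨q, hq, rfl⟩ := List.mem_map.mp ha
    exact h9 q.1 (rle_fst_mem hq)
  rw [hform, Z_doubled _ (rle_chain t) hL4 hL9]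

/-- Adult seeds give constant sequences: `Z³(s) = Z²(s)`, so `Zⁿ(s)` is eventually constant. -/
theorem Z_adult_eventually_constant (s : List ℕ) (hdig : ∀ d ∈ s, d ≤ 9)
    (hadult : ∀ d ∈ s, 4 ≤ d) (hrun : ∀ p ∈ rle s, p.2 ≤ 9) :
    Z (Z (Z s)) = Z (Z s) ∧ ∀ n ≥ 2, Z^[n] s = Z^[2] s := by
  have hform : Z s = ((rle s).map fun p => [max p.2 p.1, p.1]).flatten := by
    unfold Z
    congr 1
    apply List.map_congr_left
    intro p hp
    have h4p : 4 ≤ p.1 := hadult p.1 (rle_fst_mem hp)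
    have h9p : p.1 ≤ 9 := hdig p.1 (rle_fst_mem hp)
    have h9n : p.2 ≤ 9 := hrun p hp
    rw [digits_single (by omega) (by omega)]
    rfl
  have hmem : ∀ d ∈ Z s, 4 ≤ d ∧ d ≤ 9 := by
    intro d hd
    rw [hform] at hd
    obtain ⟨l, hl, hdl⟩ := List.mem_flatten.mp hd
    obtain ⟨p, hp, rfl⟩ := List.mem_map.mp hl
    have h4p : 4 ≤ p.1 := hadult p.1 (rle_fst_mem hp)
    have h9p : p.1 ≤ 9 := hdig p.1 (rle_fst_mem hp)
    have h9n : p.2 ≤ 9 := hrun p hp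
    simp at hdl
    rcases hdl with rfl | rfl
    · constructor <;> omega
    · exact ⟨h4p, h9p⟩
  have hruns : ∀ q ∈ rle (Z s), q.2 ≤ 3 := by
    rw [hform]
    exact (run_bound (fun p => max p.2 p.1) (rle s) (rle_chain s)).1
  have key : Z (Z (Z s)) = Z (Z s) :=
    Z_Z_eq (Z s) (fun d hd => (hmem d hd).1) (fun d hd => (hmem d hd).2) hruns
  refine ⟨key, ?_⟩
  intro n hn
  induction n with
  | zero => omega
  | succ m ih =>
    rcases Nat.lt_or_ge m 2 with h | h
    · have : m = 1 := by omega
      subst this; rfl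
    · rw [Function.iterate_succ_apply', ih h]
      have h2 : Z^[2] s = Z (Z s) := by
        simp [Function.iterate_succ_apply', Function.iterate_one]
      rw [h2]
      exact key
end
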